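/- For all integers m, n ≥ 2 there exist a finite distributive lattice D, graded by the rank function r (the height function), and an index i, such that the consecutive levels A = {x : r(x) = i} and B = {x : r(x) = i + 1} satisfy |A| = n, |B| = m and A ≤ B, and every family of intervals [a, b] with a ∈ A, b ∈ B whose union contains A ∪ B has at least m + n − 2 members. -/

import Mathlib

namespace Stmt13

variable (m n : ℕ)

/-- The "core" of `Fin n`: everything except the last element. -/
def Core : Finset (Fin n) := Finset.univ.filter (fun j : Fin n => (j : ℕ) + 1 < n)

/-- The carrier: pairs `(S, T)` with `T ≠ ∅ → Core ⊆ S`. -/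
def Dt := {p : Finset (Fin n) × Finset (Fin (m - 1)) // p.2.Nonempty → Core n ⊆ p.1}

instance : DecidablePred (fun p : Finset (Fin n) × Finset (Fin (m - 1)) =>
    p.2.Nonempty → Core n ⊆ p.1) := fun _ => inferInstanceAs (Decidable (_ → _))

instance : Fintype (Dt m n) := Subtype.fintype _

instance : Max (Dt m n) :=
  ⟨fun a b => ⟨a.1 ⊔ b.1, fun h => by
    have h' : (a.1.2 ∪ b.1.2).Nonempty := by simpa [Finset.sup_eq_union] using h
    obtain ⟨x, hx⟩ := h'
    rcases Finset.mem_union.1 hx with h' | h'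
    · exact (a.2 ⟨x, h'⟩).trans (by exact Finset.subset_union_left)
    · exact (b.2 ⟨x, h'⟩).trans (by exact Finset.subset_union_right)⟩⟩

instance : Min (Dt m n) :=
  ⟨fun a b => ⟨a.1 ⊓ b.1, fun h => by
    have h2 : (a.1.2 ∩ b.1.2).Nonempty := by simpa [Finset.inf_eq_inter] using h
    exact Finset.subset_inter (a.2 (h2.mono Finset.inter_subset_left))
      (b.2 (h2.mono Finset.inter_subset_right))⟩⟩

instance : LE (Dt m n) := ⟨fun a b => a.1 ≤ b.1⟩

instance : LT (Dt m n) := ⟨fun a b => a.1 < b.1⟩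

instance : DistribLattice (Dt m n) :=
  Function.Injective.distribLattice Subtype.val Subtype.val_injective
    Iff.rfl Iff.rfl (fun _ _ => rfl) (fun _ _ => rfl)

instance : BoundedOrder (Dt m n) where
  top := ⟨⊤, fun _ => Finset.subset_univ _⟩
  le_top a := (le_top : a.1 ≤ ⊤)
  bot := ⟨⊥, fun h => absurd h (by
    rw [Prod.snd_bot]
    exact Finset.not_nonempty_empty)⟩
  bot_le a := (bot_le : ⊥ ≤ a.1)

/-- the rank function -/
def r (p : Dt m n) : ℕ := p.1.1.card + p.1.2.card

lemma le_def {a b : Dt m n} : a ≤ b ↔ a.1.1 ⊆ b.1.1 ∧ a.1.2 ⊆ b.1.2 := Iff.rfl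

lemma r_strictMono {a b : Dt m n} (h : a < b) : r m n a < r m n b := by
  obtain ⟨⟨h1, h2⟩, hne⟩ := lt_iff_le_and_ne.1 h
  have hc1 := Finset.card_le_card h1
  have hc2 := Finset.card_le_card h2
  have : a.1.1 ≠ b.1.1 ∨ a.1.2 ≠ b.1.2 := by
    by_contra hc
    push_neg at hc
    exact hne (Subtype.ext (Prod.ext hc.1 hc.2))
  rcases this with h' | h'
  · have := Finset.card_lt_card (lt_of_le_of_ne h1 h')
    unfold r; omega
  · have := Finset.card_lt_card (lt_of_le_of_ne h2 h')
    unfold r; omega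

lemma eq_of_le_of_r_eq {a b : Dt m n} (h : a ≤ b) (hr : r m n a = r m n b) : a = b := by
  rcases eq_or_lt_of_le h with h' | h'
  · exact h'
  · exact absurd hr (ne_of_lt (r_strictMono m n h'))

lemma exists_mid {x y : Dt m n} (h : x < y) :
    ∃ z : Dt m n, x < z ∧ z ≤ y ∧ r m n z = r m n x + 1 := by
  obtain ⟨⟨h1, h2⟩, hne⟩ := lt_iff_le_and_ne.1 h
  by_cases hfst : x.1.1 = y.1.1
  · have h2' : x.1.2 ⊂ y.1.2 := by
      refine lt_of_le_of_ne h2 fun hc => hne (Subtype.ext (Prod.ext hfst hc))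
    obtain ⟨b, hby, hbx⟩ := Finset.exists_of_ssubset h2'
    refine ⟨⟨(x.1.1, insert b x.1.2), fun _ => ?_⟩, ?_, ?_, ?_⟩
    · rw [hfst]; exact y.2 ⟨b, hby⟩
    · refine lt_iff_le_and_ne.2 ⟨⟨subset_rfl, Finset.subset_insert _ _⟩, fun hc => ?_⟩
      apply hbx
      have : x.1.2 = insert b x.1.2 := congrArg (fun z : Dt m n => z.1.2) hc
      rw [this]; exact Finset.mem_insert_self _ _
    · exact ⟨hfst.le, Finset.insert_subset hby h2⟩
    · simp [r, Finset.card_insert_of_notMem hbx]; omega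
  · have h1' : x.1.1 ⊂ y.1.1 := lt_of_le_of_ne h1 hfst
    obtain ⟨a, hay, hax⟩ := Finset.exists_of_ssubset h1'
    refine ⟨⟨(insert a x.1.1, x.1.2), fun hne2 => (x.2 hne2).trans (Finset.subset_insert _ _)⟩,
      ?_, ?_, ?_⟩
    · refine lt_iff_le_and_ne.2 ⟨⟨Finset.subset_insert _ _, subset_rfl⟩, fun hc => ?_⟩
      apply hax
      have : insert a x.1.1 = x.1.1 := congrArg (fun z : Dt m n => z.1.1) hc.symm
      rw [← this]; exact Finset.mem_insert_self _ _
    · exact ⟨Finset.insert_subset hay h1, h2⟩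
    · simp [r, Finset.card_insert_of_notMem hax]; omega

lemma r_cov {x y : Dt m n} (h : x ⋖ y) : r m n y = r m n x + 1 := by
  obtain ⟨z, hxz, hzy, hr⟩ := exists_mid m n h.1
  have : z = y := by
    rcases eq_or_lt_of_le hzy with h' | h'
    · exact h'
    · exact absurd h' (h.2 hxz)
  rw [← this, hr]

/-- the last element of `Fin n` -/
def elast (hn : 2 ≤ n) : Fin n := ⟨n - 1, by omega⟩

lemma core_eq (hn : 2 ≤ n) : Core n = Finset.univ.erase (elast n hn) := by
  ext j
  simp only [Core, Finset.mem_filter, Finset.mem_univ, true_and, Finset.mem_erase,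
    and_true, Ne, Fin.ext_iff, elast]
  have := j.2
  omega

lemma card_core (hn : 2 ≤ n) : (Core n).card = n - 1 := by
  rw [core_eq n hn, Finset.card_erase_of_mem (Finset.mem_univ _)]
  simp

/-- level-`(n-1)` elements -/
def U (j : Fin n) : Dt m n := ⟨(Finset.univ.erase j, ∅), by simp⟩

/-- the big top-level element -/
def J1 : Dt m n := ⟨(Finset.univ, ∅), by simp⟩

/-- the small top-level elements -/
def Bk (k : Fin (m - 1)) : Dt m n := ⟨(Core n, {k}), fun _ => subset_rfl⟩

lemma r_U (j : Fin n) : r m n (U m n j) = n - 1 := by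
  simp [r, U, Finset.card_erase_of_mem (Finset.mem_univ _)]

lemma r_J1 : r m n (J1 m n) = n := by simp [r, J1]

lemma r_Bk (hn : 2 ≤ n) (k : Fin (m - 1)) : r m n (Bk m n k) = n := by
  simp [r, Bk, card_core n hn]
  omega

lemma U_inj {j j' : Fin n} (h : U m n j = U m n j') : j = j' := by
  have h1 : Finset.univ.erase j = Finset.univ.erase j' :=
    congrArg (fun z : Dt m n => z.1.1) h
  by_contra hne
  have : j' ∈ Finset.univ.erase j := Finset.mem_erase.2 ⟨fun hc => hne hc.symm, Finset.mem_univ _⟩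
  rw [h1] at this
  exact (Finset.mem_erase.1 this).1 rfl

lemma levelA (hn : 2 ≤ n) {p : Dt m n} (h : r m n p = n - 1) : ∃ j, p = U m n j := by
  by_cases h2 : p.1.2.Nonempty
  · have hsub := p.2 h2
    have h1 := Finset.card_le_card hsub
    rw [card_core n hn] at h1
    have := h2.card_pos
    unfold r at h
    omega
  · rw [Finset.not_nonempty_iff_eq_empty] at h2
    have hc : p.1.1.card = n - 1 := by unfold r at h; rw [h2] at h; simpa using h
    have hne : p.1.1 ≠ Finset.univ := by
      intro hc'
      rw [hc', Finset.card_univ, Fintype.card_fin] at hc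
      omega
    obtain ⟨j, hj⟩ : ∃ j, j ∉ p.1.1 := by
      by_contra hcon
      push_neg at hcon
      exact hne (Finset.eq_univ_iff_forall.2 hcon)
    refine ⟨j, Subtype.ext (Prod.ext ?_ h2)⟩
    refine Finset.eq_of_subset_of_card_le (fun x hx => Finset.mem_erase.2
      ⟨fun hc' => hj (hc' ▸ hx), Finset.mem_univ _⟩) ?_
    show (Finset.univ.erase j).card ≤ p.1.1.card
    rw [Finset.card_erase_of_mem (Finset.mem_univ _), Finset.card_univ, Fintype.card_fin, hc]

lemma levelB (hn : 2 ≤ n) {p : Dt m n} (h : r m n p = n) : p = J1 m n ∨ ∃ k, p = Bk m n k := by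
  by_cases h2 : p.1.2.Nonempty
  · have hsub := p.2 h2
    have h1 := Finset.card_le_card hsub
    rw [card_core n hn] at h1
    have hpos := h2.card_pos
    have hle : p.1.1.card ≤ n := by
      simpa using Finset.card_le_card (Finset.subset_univ p.1.1)
    unfold r at h
    have hc1 : p.1.1.card = n - 1 := by omega
    have hc2 : p.1.2.card = 1 := by omega
    obtain ⟨k, hk⟩ := Finset.card_eq_one.1 hc2
    refine Or.inr ⟨k, Subtype.ext (Prod.ext ?_ hk)⟩
    exact (Finset.eq_of_subset_of_card_le hsub (by rw [hc1, card_core n hn])).symm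
  · rw [Finset.not_nonempty_iff_eq_empty] at h2
    have hc : p.1.1.card = n := by unfold r at h; rw [h2] at h; simpa using h
    refine Or.inl (Subtype.ext (Prod.ext ?_ h2))
    apply Finset.eq_univ_of_card
    simpa using hc

end Stmt13

open Stmt13 in
/-- For all `m, n ≥ 2` there is a finite distributive lattice `D`, graded by a rank
function `r`, with consecutive levels `A` (rank `i`, size `n`) and `B` (rank `i+1`,
size `m`) satisfying `A ≤ B`, such that every family of intervals `[a, b]` with
`a ∈ A`, `b ∈ B` covering `A ∪ B` has at least `m + n - 2` members. -/
theorem stmt13 (m n : ℕ) (hm : 2 ≤ m) (hn : 2 ≤ n) :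
    ∃ (D : Type) (_ : DistribLattice D) (_ : Fintype D) (_ : BoundedOrder D)
      (r : D → ℕ) (i : ℕ),
      r ⊥ = 0 ∧ (∀ x y : D, x ⋖ y → r y = r x + 1) ∧
      {x : D | r x = i}.ncard = n ∧ {x : D | r x = i + 1}.ncard = m ∧
      (∀ a ∈ {x : D | r x = i}, ∃ b ∈ {x : D | r x = i + 1}, a ≤ b) ∧
      (∀ b ∈ {x : D | r x = i + 1}, ∃ a ∈ {x : D | r x = i}, a ≤ b) ∧
      ∀ F : Finset (D × D),
        (∀ p ∈ F, r p.1 = i ∧ r p.2 = i + 1) →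
        ({x : D | r x = i} ∪ {x : D | r x = i + 1} ⊆ ⋃ p ∈ F, Set.Icc p.1 p.2) →
        m + n - 2 ≤ F.card := by
  refine ⟨Dt m n, inferInstance, inferInstance, inferInstance, r m n, n - 1,
    ?_, ?_, ?_, ?_, ?_, ?_, ?_⟩
  · rfl
  · exact fun x y h => r_cov m n h
  · -- |A| = n
    have hset : {x : Dt m n | r m n x = n - 1} = Set.range (U m n) := by
      ext p
      simp only [Set.mem_setOf_eq, Set.mem_range]
      constructor
      · intro h
        obtain ⟨j, hj⟩ := levelA m n hn h
        exact ⟨j, hj.symm⟩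
      · rintro ⟨j, rfl⟩
        exact r_U m n j
    rw [hset, ← Set.image_univ,
      Set.ncard_image_of_injective _ (fun a b h => U_inj m n h), Set.ncard_univ]
    simp
  · -- |B| = m
    have hi : n - 1 + 1 = n := by omega
    have hset : {x : Dt m n | r m n x = n - 1 + 1} =
        Set.range (fun o : Option (Fin (m - 1)) => o.elim (J1 m n) (Bk m n)) := by
      ext p
      simp only [Set.mem_setOf_eq, Set.mem_range, hi]
      constructor
      · intro h
        rcases levelB m n hn h with h' | ⟨k, h'⟩
        · exact ⟨none, h'.symm⟩
        · exact ⟨some k, h'.symm⟩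
      · rintro ⟨o, rfl⟩
        rcases o with _ | k
        · exact r_J1 m n
        · exact r_Bk m n hn k
    have hinj : Function.Injective
        (fun o : Option (Fin (m - 1)) => o.elim (J1 m n) (Bk m n)) := by
      rintro (_ | k) (_ | k') h <;> simp only [Option.elim] at h
      · rfl
      · exact absurd (congrArg (fun z : Dt m n => z.1.2) h).symm
          (by simp [J1, Bk])
      · exact absurd (congrArg (fun z : Dt m n => z.1.2) h)
          (by simp [J1, Bk])
      · have := congrArg (fun z : Dt m n => z.1.2) h
        simp only [Bk, Finset.singleton_inj] at this
        rw [this]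
    rw [hset, ← Set.image_univ, Set.ncard_image_of_injective _ hinj, Set.ncard_univ]
    simp only [Nat.card_eq_fintype_card, Fintype.card_option, Fintype.card_fin]
    omega
  · -- A ≤ B (up direction)
    intro a ha
    obtain ⟨j, rfl⟩ := levelA m n hn ha
    refine ⟨J1 m n, ?_, ?_⟩
    · show r m n (J1 m n) = n - 1 + 1
      rw [r_J1]; omega
    · exact (le_def m n).2 ⟨Finset.subset_univ _, subset_rfl⟩
  · -- A ≤ B (down direction)
    intro b hb
    have hb' : r m n b = n := by
      have : r m n b = n - 1 + 1 := hb
      omega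
    have hrU : r m n (U m n (elast n hn)) = n - 1 := r_U m n _
    rcases levelB m n hn hb' with rfl | ⟨k, rfl⟩
    · exact ⟨U m n (elast n hn), hrU,
        (le_def m n).2 ⟨Finset.subset_univ _, subset_rfl⟩⟩
    · refine ⟨U m n (elast n hn), hrU, (le_def m n).2 ⟨?_, Finset.empty_subset _⟩⟩
      show Finset.univ.erase (elast n hn) ⊆ Core n
      rw [core_eq n hn]
  · -- covering bound
    intro F hF hcov
    have hi : n - 1 + 1 = n := by omega
    have hJB : ∀ k, J1 m n ≠ Bk m n k := by
      intro k h
      exact absurd (congrArg (fun z : Dt m n => z.1.2) h).symm (by simp [J1, Bk])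
    have key1 : ∀ j : Fin n, j ≠ elast n hn → (U m n j, J1 m n) ∈ F := by
      intro j hj
      have hmem : U m n j ∈ ⋃ p ∈ F, Set.Icc p.1 p.2 :=
        hcov (Set.mem_union_left _ (r_U m n j))
      simp only [Set.mem_iUnion, Set.mem_Icc, exists_prop] at hmem
      obtain ⟨p, hpF, hp1, hp2⟩ := hmem
      obtain ⟨hr1, hr2⟩ := hF p hpF
      have e1 : p.1 = U m n j :=
        eq_of_le_of_r_eq m n hp1 (by rw [hr1, r_U])
      have hr2' : r m n p.2 = n := by rw [hr2, hi]
      rcases levelB m n hn hr2' with e2 | ⟨k, e2⟩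
      · have : p = (U m n j, J1 m n) := Prod.ext e1 e2
        rwa [this] at hpF
      · exfalso
        rw [e2] at hp2
        have hsub : Finset.univ.erase j ⊆ Core n := ((le_def m n).1 hp2).1
        rw [core_eq n hn] at hsub
        have hmem' : elast n hn ∈ Finset.univ.erase j :=
          Finset.mem_erase.2 ⟨fun h => hj h.symm, Finset.mem_univ _⟩
        exact (Finset.mem_erase.1 (hsub hmem')).1 rfl
    have key2 : ∀ k : Fin (m - 1), (U m n (elast n hn), Bk m n k) ∈ F := by
      intro k
      have hmem : Bk m n k ∈ ⋃ p ∈ F, Set.Icc p.1 p.2 := by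
        refine hcov (Set.mem_union_right _ ?_)
        show r m n (Bk m n k) = n - 1 + 1
        rw [r_Bk m n hn, hi]
      simp only [Set.mem_iUnion, Set.mem_Icc, exists_prop] at hmem
      obtain ⟨p, hpF, hp1, hp2⟩ := hmem
      obtain ⟨hr1, hr2⟩ := hF p hpF
      have e2 : p.2 = Bk m n k :=
        (eq_of_le_of_r_eq m n hp2 (by rw [r_Bk m n hn, hr2, hi])).symm
      obtain ⟨j, e1⟩ := levelA m n hn (p := p.1) hr1
      have hje : j = elast n hn := by
        by_contra hj
        rw [e1] at hp1
        have hsub : Finset.univ.erase j ⊆ Core n := ((le_def m n).1 hp1).1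
        have hsub' : Finset.univ.erase j ⊆ Finset.univ.erase (elast n hn) := by
          rwa [core_eq n hn] at hsub
        have hmem' : elast n hn ∈ Finset.univ.erase j :=
          Finset.mem_erase.2 ⟨fun h => hj h.symm, Finset.mem_univ _⟩
        exact (Finset.mem_erase.1 (hsub' hmem')).1 rfl
      have : p = (U m n (elast n hn), Bk m n k) := Prod.ext (by rw [e1, hje]) e2
      rwa [this] at hpF
    classical
    set S : Finset (Dt m n × Dt m n) :=
      ((Finset.univ.erase (elast n hn)).image (fun j => (U m n j, J1 m n))) ∪
      (Finset.univ.image (fun k : Fin (m - 1) => (U m n (elast n hn), Bk m n k))) with hS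
    have hSF : S ⊆ F := by
      intro q hq
      simp only [hS, Finset.mem_union, Finset.mem_image, Finset.mem_erase,
        Finset.mem_univ, true_and, and_true] at hq
      rcases hq with ⟨j, hj, rfl⟩ | ⟨k, rfl⟩
      · exact key1 j hj
      · exact key2 k
    have hdisj : Disjoint
        ((Finset.univ.erase (elast n hn)).image (fun j => (U m n j, J1 m n)))
        (Finset.univ.image (fun k : Fin (m - 1) => (U m n (elast n hn), Bk m n k))) := by
      rw [Finset.disjoint_left]
      rintro q hq1 hq2
      simp only [Finset.mem_image] at hq1 hq2
      obtain ⟨j, _, rfl⟩ := hq1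
      obtain ⟨k, _, hk⟩ := hq2
      exact hJB k (congrArg Prod.snd hk).symm
    have hcard : S.card = (n - 1) + (m - 1) := by
      rw [hS, Finset.card_union_of_disjoint hdisj,
        Finset.card_image_of_injective _ (fun a b h => U_inj m n (congrArg Prod.fst h)),
        Finset.card_image_of_injective _ ?_, Finset.card_erase_of_mem (Finset.mem_univ _),
        Finset.card_univ, Finset.card_univ, Fintype.card_fin, Fintype.card_fin]
      intro a b h
      have := congrArg (fun z : Dt m n × Dt m n => z.2.1.2) h
      simp only [Bk, Finset.singleton_inj] at this
      exact this
    have := Finset.card_le_card hSF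
    omega
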